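/- arXiv:2307.02891 — 5 statements merged into one kernel-verified Lean document; each statement's English description precedes it below -/
import Mathlib

section
/- Let 𝓔 and 𝓩 be nonempty finite types, P a channel, θ' a fully supported distribution on 𝓔, and z : Fin M → 𝓩 samples such that for every i there exists e with P (z i) e > 0. Then for every distribution θ on 𝓔, the EM surrogate can be rewritten in terms of the BaBE update and the empirical frequencies: Q(θ, θ') = M · Σ_{e ∈ 𝓔} T(θ') e · log (θ e). -/
open Finset Real Filter
open scoped Classical

/-- Posterior weight `W_{θ'}(w, e) = P w e * θ' e / ∑ e', P w e' * θ' e'`. -/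
noncomputable def West {𝓔 𝓩 : Type*} [Fintype 𝓔] (P : 𝓩 → 𝓔 → ℝ) (θ' : 𝓔 → ℝ)
    (w : 𝓩) (e : 𝓔) : ℝ :=
  P w e * θ' e / ∑ e' : 𝓔, P w e' * θ' e'

/-- EM surrogate `Q(θ, θ') = ∑ i, ∑ e, W_{θ'}(z i, e) * log (θ e)`. -/
noncomputable def Qsur {𝓔 𝓩 : Type*} [Fintype 𝓔] (P : 𝓩 → 𝓔 → ℝ) {M : ℕ}
    (z : Fin M → 𝓩) (θ θ' : 𝓔 → ℝ) : ℝ :=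
  ∑ i : Fin M, ∑ e : 𝓔, West P θ' (z i) e * Real.log (θ e)

/-- Empirical frequency `φ(w) = |{i : z i = w}| / M`. -/
noncomputable def emp {𝓩 : Type*} {M : ℕ} (z : Fin M → 𝓩) (w : 𝓩) : ℝ :=
  ((Finset.univ.filter (fun i : Fin M => z i = w)).card : ℝ) / M

/-- BaBE update `T(θ') e = ∑ w, φ(w) * W_{θ'}(w, e)`. -/
noncomputable def babe {𝓔 𝓩 : Type*} [Fintype 𝓔] [Fintype 𝓩] (P : 𝓩 → 𝓔 → ℝ) {M : ℕ}
    (z : Fin M → 𝓩) (θ' : 𝓔 → ℝ) (e : 𝓔) : ℝ :=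
  ∑ w : 𝓩, emp z w * West P θ' w e

/-- Log-likelihood `L(θ) = ∑ i, log (∑ e, P (z i) e * θ e)`. -/
noncomputable def loglik {𝓔 𝓩 : Type*} [Fintype 𝓔] (P : 𝓩 → 𝓔 → ℝ) {M : ℕ}
    (z : Fin M → 𝓩) (θ : 𝓔 → ℝ) : ℝ :=
  ∑ i : Fin M, Real.log (∑ e : 𝓔, P (z i) e * θ e)

theorem stmt2 {𝓔 𝓩 : Type*} [Fintype 𝓔] [Fintype 𝓩] [Nonempty 𝓔] [Nonempty 𝓩]
    (P : 𝓩 → 𝓔 → ℝ) (hPnn : ∀ w e, 0 ≤ P w e) (hPsum : ∀ e, ∑ w : 𝓩, P w e = 1)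
    (θ' : 𝓔 → ℝ) (hθ'pos : ∀ e, 0 < θ' e) (hθ'sum : ∑ e : 𝓔, θ' e = 1)
    {M : ℕ} (hM : 1 ≤ M) (z : Fin M → 𝓩)
    (hz : ∀ i : Fin M, ∃ e : 𝓔, 0 < P (z i) e)
    (θ : 𝓔 → ℝ) (hθnn : ∀ e, 0 ≤ θ e) (hθsum : ∑ e : 𝓔, θ e = 1) :
    Qsur P z θ θ' = (M : ℝ) * ∑ e : 𝓔, babe P z θ' e * Real.log (θ e) := by
  have hM0 : (M : ℝ) ≠ 0 := by positivity
  have key : ∀ g : 𝓩 → ℝ, ∑ i : Fin M, g (z i)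
      = ∑ w : 𝓩, ((Finset.univ.filter (fun i : Fin M => z i = w)).card : ℝ) * g w := by
    intro g
    rw [← Finset.sum_fiberwise Finset.univ z (fun i => g (z i))]
    refine Finset.sum_congr rfl fun w _ => ?_
    rw [Finset.sum_congr rfl (fun i hi => by
      rw [(Finset.mem_filter.mp hi).2]), Finset.sum_const, nsmul_eq_mul]
  unfold Qsur babe emp
  rw [key (fun w => ∑ e : 𝓔, West P θ' w e * Real.log (θ e))]
  simp only [Finset.mul_sum, Finset.sum_mul]
  rw [Finset.sum_comm]
  refine Finset.sum_congr rfl fun w _ => Finset.sum_congr rfl fun e _ => ?_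
  field_simp
end

section
/- (Likelihood ascent of the BaBE/EM step.) Let 𝓔 and 𝓩 be nonempty finite types, P a channel with P w e > 0 for all w ∈ 𝓩 and e ∈ 𝓔, θ' a fully supported distribution on 𝓔, and z : Fin M → 𝓩 samples. Then applying one BaBE update does not decrease the log-likelihood: L(T(θ')) ≥ L(θ'). -/
open Finset Real Filter
open scoped Classical

theorem stmt8 {𝓔 𝓩 : Type*} [Fintype 𝓔] [Fintype 𝓩] [Nonempty 𝓔] [Nonempty 𝓩]
    (P : 𝓩 → 𝓔 → ℝ) (hPpos : ∀ w e, 0 < P w e) (hPsum : ∀ e, ∑ w : 𝓩, P w e = 1)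
    (θ' : 𝓔 → ℝ) (hθ'pos : ∀ e, 0 < θ' e) (hθ'sum : ∑ e : 𝓔, θ' e = 1)
    {M : ℕ} (hM : 1 ≤ M) (z : Fin M → 𝓩) :
    loglik P z (babe P z θ') ≥ loglik P z θ' := by
  classical
  have hMpos : (0:ℝ) < M := by exact_mod_cast hM
  set θ : 𝓔 → ℝ := babe P z θ' with hθdef
  have hDpos : ∀ w : 𝓩, 0 < ∑ e' : 𝓔, P w e' * θ' e' := fun w =>
    Finset.sum_pos (fun e _ => mul_pos (hPpos w e) (hθ'pos e)) Finset.univ_nonempty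
  have hWpos : ∀ w e, 0 < West P θ' w e := fun w e =>
    div_pos (mul_pos (hPpos w e) (hθ'pos e)) (hDpos w)
  have hWsum : ∀ w, ∑ e : 𝓔, West P θ' w e = 1 := by
    intro w
    unfold West
    rw [← Finset.sum_div, div_self (hDpos w).ne']
  have hempnn : ∀ w, 0 ≤ emp z w := fun w => by unfold emp; positivity
  have hempsum : ∑ w : 𝓩, emp z w = 1 := by
    unfold emp
    rw [← Finset.sum_div, div_eq_one_iff_eq hMpos.ne']
    have h := Finset.card_eq_sum_card_fiberwise
      (f := z) (s := (Finset.univ : Finset (Fin M))) (t := (Finset.univ : Finset 𝓩))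
      (fun i _ => Finset.mem_univ (z i))
    simp only [Finset.card_univ, Fintype.card_fin] at h
    exact_mod_cast h.symm
  have hTpos : ∀ e, 0 < θ e := by
    intro e
    obtain ⟨w0, hw0mem, hw0⟩ : ∃ w ∈ (Finset.univ : Finset 𝓩), 0 < emp z w := by
      by_contra h
      push_neg at h
      have hz : ∑ w : 𝓩, emp z w = 0 :=
        Finset.sum_eq_zero fun w hw => le_antisymm (h w hw) (hempnn w)
      rw [hempsum] at hz; norm_num at hz
    exact Finset.sum_pos' (fun w _ => mul_nonneg (hempnn w) (hWpos w e).le)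
      ⟨w0, hw0mem, mul_pos hw0 (hWpos w0 e)⟩
  have hTsum : ∑ e : 𝓔, θ e = 1 := by
    show ∑ e : 𝓔, babe P z θ' e = 1
    unfold babe
    rw [Finset.sum_comm]
    simp_rw [← Finset.mul_sum, hWsum, mul_one]
    exact hempsum
  -- sum of posterior weights over samples relates to babe
  have hfiber : ∀ e, ∑ i : Fin M, West P θ' (z i) e = M * θ e := by
    intro e
    have h1 : ∑ i : Fin M, West P θ' (z i) e
        = ∑ w : 𝓩, ∑ i ∈ Finset.univ.filter (fun i => z i = w), West P θ' (z i) e :=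
      (Finset.sum_fiberwise_of_maps_to (fun i _ => Finset.mem_univ (z i)) _).symm
    rw [h1]
    show _ = (M:ℝ) * babe P z θ' e
    unfold babe emp
    rw [Finset.mul_sum]
    refine Finset.sum_congr rfl fun w _ => ?_
    rw [Finset.sum_congr rfl (fun i hi => by
      rw [(Finset.mem_filter.mp hi).2]), Finset.sum_const, nsmul_eq_mul]
    field_simp
  -- Step A: Jensen per sample
  have hstepA : ∀ i : Fin M,
      ∑ e : 𝓔, West P θ' (z i) e * (Real.log (θ e) - Real.log (θ' e))
        ≤ Real.log (∑ e : 𝓔, P (z i) e * θ e) - Real.log (∑ e : 𝓔, P (z i) e * θ' e) := by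
    intro i
    set w := z i with hw
    have hnum : 0 < ∑ e : 𝓔, P w e * θ e :=
      Finset.sum_pos (fun e _ => mul_pos (hPpos w e) (hTpos e)) Finset.univ_nonempty
    have hconc := (StrictConcaveOn.concaveOn strictConcaveOn_log_Ioi).le_map_sum
      (t := Finset.univ) (w := fun e => West P θ' w e) (p := fun e => θ e / θ' e)
      (fun e _ => (hWpos w e).le) (hWsum w)
      (fun e _ => Set.mem_Ioi.mpr (div_pos (hTpos e) (hθ'pos e)))
    have hsum_eq : ∑ e : 𝓔, West P θ' w e * (θ e / θ' e)
        = (∑ e : 𝓔, P w e * θ e) / (∑ e' : 𝓔, P w e' * θ' e') := by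
      rw [Finset.sum_div]
      refine Finset.sum_congr rfl fun e _ => ?_
      unfold West
      field_simp [(hθ'pos e).ne', (hDpos w).ne']
    calc ∑ e : 𝓔, West P θ' w e * (Real.log (θ e) - Real.log (θ' e))
        = ∑ e : 𝓔, West P θ' w e • Real.log (θ e / θ' e) := by
          refine Finset.sum_congr rfl fun e _ => ?_
          rw [smul_eq_mul, Real.log_div (hTpos e).ne' (hθ'pos e).ne']
      _ ≤ Real.log (∑ e : 𝓔, West P θ' w e • (θ e / θ' e)) := hconc
      _ = Real.log ((∑ e : 𝓔, P w e * θ e) / (∑ e' : 𝓔, P w e' * θ' e')) := by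
          simp_rw [smul_eq_mul]; rw [hsum_eq]
      _ = Real.log (∑ e : 𝓔, P w e * θ e) - Real.log (∑ e : 𝓔, P w e * θ' e) :=
          Real.log_div hnum.ne' (hDpos w).ne'
  -- Gibbs' inequality
  have hgibbs : 0 ≤ ∑ e : 𝓔, θ e * (Real.log (θ e) - Real.log (θ' e)) := by
    have h1 : ∑ e : 𝓔, θ e * (Real.log (θ' e) - Real.log (θ e)) ≤ ∑ e : 𝓔, (θ' e - θ e) := by
      refine Finset.sum_le_sum fun e _ => ?_
      have hx : 0 < θ' e / θ e := div_pos (hθ'pos e) (hTpos e)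
      have hlog := Real.log_le_sub_one_of_pos hx
      rw [Real.log_div (hθ'pos e).ne' (hTpos e).ne'] at hlog
      calc θ e * (Real.log (θ' e) - Real.log (θ e))
          ≤ θ e * (θ' e / θ e - 1) := mul_le_mul_of_nonneg_left hlog (hTpos e).le
        _ = θ' e - θ e := by rw [mul_sub, mul_one, mul_div_cancel₀ _ (hTpos e).ne']
    have h2 : ∑ e : 𝓔, (θ' e - θ e) = 0 := by
      rw [Finset.sum_sub_distrib, hθ'sum, hTsum, sub_self]
    have h3 : ∑ e : 𝓔, θ e * (Real.log (θ' e) - Real.log (θ e))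
        = -∑ e : 𝓔, θ e * (Real.log (θ e) - Real.log (θ' e)) := by
      rw [← Finset.sum_neg_distrib]
      exact Finset.sum_congr rfl fun e _ => by ring
    linarith [h1.trans_eq h2]
  -- assemble
  have h3 : ∑ i : Fin M, ∑ e : 𝓔, West P θ' (z i) e * (Real.log (θ e) - Real.log (θ' e))
      = M * ∑ e : 𝓔, θ e * (Real.log (θ e) - Real.log (θ' e)) := by
    rw [Finset.sum_comm, Finset.mul_sum]
    refine Finset.sum_congr rfl fun e _ => ?_
    rw [← Finset.sum_mul, hfiber e]
    ring
  have h4 : ∑ i : Fin M, ∑ e : 𝓔, West P θ' (z i) e * (Real.log (θ e) - Real.log (θ' e))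
      ≤ ∑ i : Fin M, (Real.log (∑ e : 𝓔, P (z i) e * θ e)
          - Real.log (∑ e : 𝓔, P (z i) e * θ' e)) :=
    Finset.sum_le_sum fun i _ => hstepA i
  have h5 : loglik P z θ - loglik P z θ'
      = ∑ i : Fin M, (Real.log (∑ e : 𝓔, P (z i) e * θ e)
          - Real.log (∑ e : 𝓔, P (z i) e * θ' e)) := by
    unfold loglik
    rw [Finset.sum_sub_distrib]
  have hMG : 0 ≤ (M:ℝ) * ∑ e : 𝓔, θ e * (Real.log (θ e) - Real.log (θ' e)) :=
    mul_nonneg hMpos.le hgibbs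
  have : loglik P z θ' ≤ loglik P z θ := by linarith [h4, h3 ▸ hMG]
  exact this
end

section
/- (Convergence of the likelihood values along the BaBE iteration.) Let 𝓔 and 𝓩 be nonempty finite types, P a channel with P w e > 0 for all w ∈ 𝓩 and e ∈ 𝓔, and z : Fin M → 𝓩 samples. Define the BaBE iterates by θ⁽⁰⁾ = the uniform distribution on 𝓔 (θ⁽⁰⁾ e = 1/|𝓔|) and θ⁽ᵗ⁺¹⁾ = T(θ⁽ᵗ⁾). Then every θ⁽ᵗ⁾ is a fully supported distribution on 𝓔, the sequence t ↦ L(θ⁽ᵗ⁾) is monotonically nondecreasing and bounded above by 0, and hence it converges to a real limit. -/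
open Finset Real Filter
open scoped Classical

lemma jensen_log_aux {ι : Type*} (t : Finset ι) (w p : ι → ℝ)
    (hw : ∀ i ∈ t, 0 ≤ w i) (hw1 : ∑ i ∈ t, w i = 1)
    (hp : ∀ i ∈ t, 0 < p i) :
    ∑ i ∈ t, w i * Real.log (p i) ≤ Real.log (∑ i ∈ t, w i * p i) := by
  have := strictConcaveOn_log_Ioi.concaveOn.le_map_sum hw hw1 (fun i hi => hp i hi)
  simpa [smul_eq_mul] using this

section aux
variable {𝓔 𝓩 : Type*} [Fintype 𝓔] [Fintype 𝓩] [Nonempty 𝓔] [Nonempty 𝓩]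
  (P : 𝓩 → 𝓔 → ℝ)

lemma Spos (hPpos : ∀ w e, 0 < P w e) (θ' : 𝓔 → ℝ) (hp : ∀ e, 0 < θ' e) (w : 𝓩) :
    0 < ∑ e : 𝓔, P w e * θ' e :=
  Finset.sum_pos (fun e _ => mul_pos (hPpos w e) (hp e)) univ_nonempty

lemma West_pos (hPpos : ∀ w e, 0 < P w e) (θ' : 𝓔 → ℝ) (hp : ∀ e, 0 < θ' e)
    (w : 𝓩) (e : 𝓔) : 0 < West P θ' w e :=
  div_pos (mul_pos (hPpos w e) (hp e)) (Spos P hPpos θ' hp w)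

lemma West_sum (hPpos : ∀ w e, 0 < P w e) (θ' : 𝓔 → ℝ) (hp : ∀ e, 0 < θ' e)
    (w : 𝓩) : ∑ e : 𝓔, West P θ' w e = 1 := by
  unfold West
  rw [← Finset.sum_div]
  exact div_self (Spos P hPpos θ' hp w).ne'

lemma emp_nonneg {M : ℕ} (z : Fin M → 𝓩) (w : 𝓩) : 0 ≤ emp z w := by
  unfold emp; positivity

lemma emp_sum {M : ℕ} (hM : 1 ≤ M) (z : Fin M → 𝓩) : ∑ w : 𝓩, emp z w = 1 := by
  have hMne : (M : ℝ) ≠ 0 := by positivity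
  unfold emp
  rw [← Finset.sum_div]
  rw [div_eq_one_iff_eq hMne]
  rw [← Nat.cast_sum]
  norm_cast
  have h := Finset.card_eq_sum_card_fiberwise (f := z) (s := univ) (t := univ)
    (fun x _ => mem_univ _)
  rw [Finset.card_univ, Fintype.card_fin] at h
  exact h.symm

lemma babe_pos (hPpos : ∀ w e, 0 < P w e) {M : ℕ} (hM : 1 ≤ M) (z : Fin M → 𝓩)
    (θ' : 𝓔 → ℝ) (hp : ∀ e, 0 < θ' e) (e : 𝓔) : 0 < babe P z θ' e := by
  unfold babe
  have i0 : Fin M := ⟨0, hM⟩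
  apply Finset.sum_pos' (fun w _ => mul_nonneg (emp_nonneg z w)
    (West_pos P hPpos θ' hp w e).le)
  refine ⟨z i0, mem_univ _, mul_pos ?_ (West_pos P hPpos θ' hp _ e)⟩
  unfold emp
  apply div_pos _ (by positivity)
  have : i0 ∈ univ.filter (fun i : Fin M => z i = z i0) := by simp
  have := Finset.card_pos.2 ⟨i0, this⟩
  exact_mod_cast this

lemma babe_sum (hPpos : ∀ w e, 0 < P w e) {M : ℕ} (hM : 1 ≤ M) (z : Fin M → 𝓩)
    (θ' : 𝓔 → ℝ) (hp : ∀ e, 0 < θ' e) : ∑ e : 𝓔, babe P z θ' e = 1 := by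
  unfold babe
  rw [Finset.sum_comm]
  calc ∑ w : 𝓩, ∑ e : 𝓔, emp z w * West P θ' w e
      = ∑ w : 𝓩, emp z w * ∑ e : 𝓔, West P θ' w e := by
        simp [Finset.mul_sum]
    _ = ∑ w : 𝓩, emp z w := by
        simp [West_sum P hPpos θ' hp]
    _ = 1 := emp_sum hM z

lemma loglik_step_le (hPpos : ∀ w e, 0 < P w e) {M : ℕ} (hM : 1 ≤ M) (z : Fin M → 𝓩)
    (θ' : 𝓔 → ℝ) (hp : ∀ e, 0 < θ' e) (hs : ∑ e : 𝓔, θ' e = 1) :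
    loglik P z θ' ≤ loglik P z (babe P z θ') := by
  set θ := babe P z θ' with hθ
  have hθpos : ∀ e, 0 < θ e := babe_pos P hPpos hM z θ' hp
  have hθsum : ∑ e : 𝓔, θ e = 1 := babe_sum P hPpos hM z θ' hp
  have hMne : (M : ℝ) ≠ 0 := by positivity
  -- pointwise Jensen bound
  have key : ∀ w : 𝓩,
      Real.log (∑ e : 𝓔, P w e * θ' e) + ∑ e : 𝓔, West P θ' w e * Real.log (θ e / θ' e)
        ≤ Real.log (∑ e : 𝓔, P w e * θ e) := by
    intro w
    have h1 : ∑ e : 𝓔, West P θ' w e * (θ e / θ' e)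
        = (∑ e : 𝓔, P w e * θ e) / (∑ e : 𝓔, P w e * θ' e) := by
      rw [Finset.sum_div]
      refine Finset.sum_congr rfl (fun e _ => ?_)
      unfold West
      rw [div_mul_eq_mul_div]
      congr 1
      rw [mul_comm (P w e) (θ' e), mul_assoc, mul_comm (θ' e), mul_assoc,
        div_mul_cancel₀ (θ e) (hp e).ne']
    have jens := jensen_log_aux univ (West P θ' w) (fun e => θ e / θ' e)
      (fun e _ => (West_pos P hPpos θ' hp w e).le) (West_sum P hPpos θ' hp w)
      (fun e _ => div_pos (hθpos e) (hp e))
    rw [h1, Real.log_div (Spos P hPpos θ hθpos w).ne' (Spos P hPpos θ' hp w).ne'] at jens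
    linarith
  have hsum_le : loglik P z θ' +
      ∑ i : Fin M, ∑ e : 𝓔, West P θ' (z i) e * Real.log (θ e / θ' e) ≤ loglik P z θ := by
    unfold loglik
    rw [← Finset.sum_add_distrib]
    exact Finset.sum_le_sum (fun i _ => key (z i))
  -- the correction term is nonnegative (Gibbs)
  have hmid : 0 ≤ ∑ i : Fin M, ∑ e : 𝓔, West P θ' (z i) e * Real.log (θ e / θ' e) := by
    set g : 𝓩 → ℝ := fun w => ∑ e : 𝓔, West P θ' w e * Real.log (θ e / θ' e) with hg
    have fib : ∑ i : Fin M, g (z i)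
        = ∑ w : 𝓩, ((univ.filter (fun i : Fin M => z i = w)).card : ℝ) * g w := by
      rw [← Finset.sum_fiberwise_of_maps_to
        (fun (i : Fin M) (_ : i ∈ (univ : Finset (Fin M))) => mem_univ (z i))
        (fun i => g (z i))]
      refine Finset.sum_congr rfl (fun w _ => ?_)
      rw [Finset.sum_congr rfl (fun i hi => by
        rw [(Finset.mem_filter.1 hi).2]), Finset.sum_const, nsmul_eq_mul]
    have card_eq : ∀ w : 𝓩, ((univ.filter (fun i : Fin M => z i = w)).card : ℝ)
        = M * emp z w := by
      intro w; unfold emp; field_simp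
    have gibbs : 0 ≤ ∑ e : 𝓔, θ e * Real.log (θ e / θ' e) := by
      have jens := jensen_log_aux univ θ (fun e => θ' e / θ e)
        (fun e _ => (hθpos e).le) hθsum (fun e _ => div_pos (hp e) (hθpos e))
      have h2 : ∑ e : 𝓔, θ e * (θ' e / θ e) = 1 := by
        rw [Finset.sum_congr rfl (fun e _ => mul_div_cancel₀ (θ' e) (hθpos e).ne')]
        exact hs
      rw [h2, Real.log_one] at jens
      have h3 : ∑ e : 𝓔, θ e * Real.log (θ e / θ' e)
          = -∑ e : 𝓔, θ e * Real.log (θ' e / θ e) := by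
        rw [← Finset.sum_neg_distrib]
        refine Finset.sum_congr rfl (fun e _ => ?_)
        rw [Real.log_div (hθpos e).ne' (hp e).ne', Real.log_div (hp e).ne' (hθpos e).ne']
        ring
      rw [h3]
      linarith
    have expand : ∑ w : 𝓩, ((univ.filter (fun i : Fin M => z i = w)).card : ℝ) * g w
        = M * ∑ e : 𝓔, θ e * Real.log (θ e / θ' e) := by
      simp only [hg, card_eq]
      have lhs_eq : ∀ w : 𝓩, (M : ℝ) * emp z w * ∑ e : 𝓔, West P θ' w e * Real.log (θ e / θ' e)
          = ∑ e : 𝓔, (M : ℝ) * (emp z w * West P θ' w e * Real.log (θ e / θ' e)) := by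
        intro w; rw [Finset.mul_sum]; exact Finset.sum_congr rfl fun e _ => by ring
      rw [Finset.sum_congr rfl fun w _ => lhs_eq w, Finset.sum_comm, Finset.mul_sum]
      refine Finset.sum_congr rfl fun e _ => ?_
      have hθe : θ e = ∑ w : 𝓩, emp z w * West P θ' w e := rfl
      rw [hθe, Finset.sum_mul, Finset.mul_sum]
    have : (0:ℝ) ≤ M * ∑ e : 𝓔, θ e * Real.log (θ e / θ' e) := by positivity
    rw [← expand, ← fib] at this
    exact this
  linarith

end aux

theorem stmt9 {𝓔 𝓩 : Type*} [Fintype 𝓔] [Fintype 𝓩] [Nonempty 𝓔] [Nonempty 𝓩]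
    (P : 𝓩 → 𝓔 → ℝ) (hPpos : ∀ w e, 0 < P w e) (hPsum : ∀ e, ∑ w : 𝓩, P w e = 1)
    {M : ℕ} (hM : 1 ≤ M) (z : Fin M → 𝓩)
    (θseq : ℕ → 𝓔 → ℝ)
    (h0 : θseq 0 = fun _ => 1 / (Fintype.card 𝓔 : ℝ))
    (hstep : ∀ t : ℕ, θseq (t + 1) = babe P z (θseq t)) :
    (∀ t : ℕ, (∀ e : 𝓔, 0 < θseq t e) ∧ ∑ e : 𝓔, θseq t e = 1) ∧
    Monotone (fun t : ℕ => loglik P z (θseq t)) ∧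
    (∀ t : ℕ, loglik P z (θseq t) ≤ 0) ∧
    ∃ l : ℝ, Tendsto (fun t : ℕ => loglik P z (θseq t)) atTop (nhds l) := by
  have hcard : (0:ℝ) < Fintype.card 𝓔 := by
    exact_mod_cast Fintype.card_pos
  have hinv : ∀ t : ℕ, (∀ e : 𝓔, 0 < θseq t e) ∧ ∑ e : 𝓔, θseq t e = 1 := by
    intro t
    induction t with
    | zero =>
      rw [h0]
      constructor
      · intro e; positivity
      · rw [Finset.sum_const, card_univ, nsmul_eq_mul]
        field_simp
    | succ t ih =>
      rw [hstep t]
      exact ⟨babe_pos P hPpos hM z _ ih.1, babe_sum P hPpos hM z _ ih.1⟩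
  have hmono : Monotone (fun t : ℕ => loglik P z (θseq t)) := by
    apply monotone_nat_of_le_succ
    intro t
    rw [hstep t]
    exact loglik_step_le P hPpos hM z _ (hinv t).1 (hinv t).2
  have hbound : ∀ t : ℕ, loglik P z (θseq t) ≤ 0 := by
    intro t
    unfold loglik
    apply Finset.sum_nonpos
    intro i _
    apply Real.log_nonpos
    · exact (Spos P hPpos _ (hinv t).1 (z i)).le
    · have hle : ∑ e : 𝓔, P (z i) e * θseq t e ≤ ∑ e : 𝓔, 1 * θseq t e := by
        apply Finset.sum_le_sum
        intro e _
        apply mul_le_mul_of_nonneg_right _ ((hinv t).1 e).le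
        have h1 : P (z i) e ≤ ∑ w : 𝓩, P w e :=
          Finset.single_le_sum (fun w _ => (hPpos w e).le) (mem_univ _)
        rw [hPsum e] at h1
        exact h1
      simpa [(hinv t).2] using hle
  refine ⟨hinv, hmono, hbound, ?_⟩
  refine ⟨_, tendsto_atTop_ciSup hmono ⟨0, ?_⟩⟩
  rintro x ⟨t, rfl⟩
  exact hbound t
end

section
/- (Uniqueness of the maximum-likelihood estimate for invertible bias matrices.) Let 𝓔 and 𝓩 be nonempty finite types, P a channel, and z : Fin M → 𝓩 samples such that every w ∈ 𝓩 occurs among the samples (φ(w) > 0 for all w). Assume that the linear map (ℝ^𝓔 → ℝ^𝓩) sending θ to (w ↦ Σ_e P w e · θ e) is injective. Let D be the set of distributions θ on 𝓔 with Σ_e P w e · θ e > 0 for all w ∈ 𝓩. If θ₁, θ₂ ∈ D both maximize L over D (i.e. L(θⱼ) ≥ L(θ) for every θ ∈ D, for j = 1, 2), then θ₁ = θ₂. -/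
open Finset Real Filter
open scoped Classical

theorem stmt11 {𝓔 𝓩 : Type*} [Fintype 𝓔] [Fintype 𝓩] [Nonempty 𝓔] [Nonempty 𝓩]
    (P : 𝓩 → 𝓔 → ℝ) (hPnn : ∀ w e, 0 ≤ P w e) (hPsum : ∀ e, ∑ w : 𝓩, P w e = 1)
    {M : ℕ} (hM : 1 ≤ M) (z : Fin M → 𝓩)
    (hfreq : ∀ w : 𝓩, 0 < emp z w)
    (hinj : Function.Injective (fun (θ : 𝓔 → ℝ) (w : 𝓩) => ∑ e : 𝓔, P w e * θ e))
    (θ₁ : 𝓔 → ℝ) (hθ₁nn : ∀ e, 0 ≤ θ₁ e) (hθ₁sum : ∑ e : 𝓔, θ₁ e = 1)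
    (hθ₁pos : ∀ w : 𝓩, 0 < ∑ e : 𝓔, P w e * θ₁ e)
    (θ₂ : 𝓔 → ℝ) (hθ₂nn : ∀ e, 0 ≤ θ₂ e) (hθ₂sum : ∑ e : 𝓔, θ₂ e = 1)
    (hθ₂pos : ∀ w : 𝓩, 0 < ∑ e : 𝓔, P w e * θ₂ e)
    (hmax₁ : ∀ θ : 𝓔 → ℝ, (∀ e, 0 ≤ θ e) → (∑ e : 𝓔, θ e = 1) →
      (∀ w : 𝓩, 0 < ∑ e : 𝓔, P w e * θ e) → loglik P z θ ≤ loglik P z θ₁)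
    (hmax₂ : ∀ θ : 𝓔 → ℝ, (∀ e, 0 ≤ θ e) → (∑ e : 𝓔, θ e = 1) →
      (∀ w : 𝓩, 0 < ∑ e : 𝓔, P w e * θ e) → loglik P z θ ≤ loglik P z θ₂) :
    θ₁ = θ₂ := by
  -- midpoint distribution
  set s₁ : 𝓩 → ℝ := fun w => ∑ e : 𝓔, P w e * θ₁ e with hs₁
  set s₂ : 𝓩 → ℝ := fun w => ∑ e : 𝓔, P w e * θ₂ e with hs₂
  set θm : 𝓔 → ℝ := fun e => (θ₁ e + θ₂ e) / 2 with hθm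
  have hθmnn : ∀ e, 0 ≤ θm e := fun e => by
    have := hθ₁nn e; have := hθ₂nn e; simp only [hθm]; linarith
  have hθmsum : ∑ e : 𝓔, θm e = 1 := by
    simp only [hθm]
    rw [← Finset.sum_div, Finset.sum_add_distrib, hθ₁sum, hθ₂sum]
    norm_num
  have hsm : ∀ w, (∑ e : 𝓔, P w e * θm e) = (s₁ w + s₂ w) / 2 := by
    intro w
    simp only [hθm, hs₁, hs₂]
    have h2 : (∑ x : 𝓔, P w x * ((θ₁ x + θ₂ x) / 2)) * 2
        = ∑ e : 𝓔, P w e * θ₁ e + ∑ e : 𝓔, P w e * θ₂ e := by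
      rw [Finset.sum_mul, ← Finset.sum_add_distrib]
      exact Finset.sum_congr rfl fun e _ => by ring
    linarith
  have hθmpos : ∀ w : 𝓩, 0 < ∑ e : 𝓔, P w e * θm e := fun w => by
    rw [hsm w]; have := hθ₁pos w; have := hθ₂pos w; simp only [hs₁, hs₂] at *; linarith
  -- equal likelihoods
  have hL12 : loglik P z θ₁ = loglik P z θ₂ :=
    le_antisymm (hmax₂ θ₁ hθ₁nn hθ₁sum hθ₁pos) (hmax₁ θ₂ hθ₂nn hθ₂sum hθ₂pos)
  -- termwise concavity
  have hterm : ∀ i : Fin M,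
      (Real.log (s₁ (z i)) + Real.log (s₂ (z i))) / 2 ≤ Real.log ((s₁ (z i) + s₂ (z i)) / 2) := by
    intro i
    have h1 : s₁ (z i) ∈ Set.Ioi (0:ℝ) := hθ₁pos (z i)
    have h2 : s₂ (z i) ∈ Set.Ioi (0:ℝ) := hθ₂pos (z i)
    have := strictConcaveOn_log_Ioi.concaveOn.2 h1 h2 (by norm_num : (0:ℝ) ≤ 1/2)
      (by norm_num : (0:ℝ) ≤ 1/2) (by norm_num)
    simp only [smul_eq_mul] at this
    calc (Real.log (s₁ (z i)) + Real.log (s₂ (z i))) / 2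
        = 1/2 * Real.log (s₁ (z i)) + 1/2 * Real.log (s₂ (z i)) := by ring
      _ ≤ Real.log (1/2 * s₁ (z i) + 1/2 * s₂ (z i)) := this
      _ = Real.log ((s₁ (z i) + s₂ (z i)) / 2) := by ring_nf
  -- likelihood of midpoint
  have hLm : loglik P z θm ≤ loglik P z θ₁ := hmax₁ θm hθmnn hθmsum hθmpos
  have hLmsum : loglik P z θm = ∑ i : Fin M, Real.log ((s₁ (z i) + s₂ (z i)) / 2) := by
    unfold loglik; exact Finset.sum_congr rfl fun i _ => by rw [hsm]
  have hLavg : loglik P z θ₁ = ∑ i : Fin M,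
      (Real.log (s₁ (z i)) + Real.log (s₂ (z i))) / 2 := by
    have : loglik P z θ₁ = (loglik P z θ₁ + loglik P z θ₂) / 2 := by rw [hL12]; ring
    rw [this]; unfold loglik
    rw [← Finset.sum_add_distrib, ← Finset.sum_div]
  -- each term is equality
  have hzero : ∀ i ∈ Finset.univ, (Real.log ((s₁ (z i) + s₂ (z i)) / 2)
      - (Real.log (s₁ (z i)) + Real.log (s₂ (z i))) / 2) = 0 := by
    have hsum0 : ∑ i : Fin M, (Real.log ((s₁ (z i) + s₂ (z i)) / 2)
        - (Real.log (s₁ (z i)) + Real.log (s₂ (z i))) / 2) = loglik P z θm - loglik P z θ₁ := by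
      rw [Finset.sum_sub_distrib, ← hLmsum, ← hLavg]
    have hle0 : ∑ i : Fin M, (Real.log ((s₁ (z i) + s₂ (z i)) / 2)
        - (Real.log (s₁ (z i)) + Real.log (s₂ (z i))) / 2) ≤ 0 := by
      rw [hsum0]; linarith
    have := (Finset.sum_eq_zero_iff_of_nonneg
      (fun i _ => by have := hterm i; linarith)).mp
      (le_antisymm hle0 (Finset.sum_nonneg fun i _ => by have := hterm i; linarith))
    exact this
  -- s₁ (z i) = s₂ (z i)
  have hsz : ∀ i : Fin M, s₁ (z i) = s₂ (z i) := by
    intro i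
    by_contra hne
    have h1 : s₁ (z i) ∈ Set.Ioi (0:ℝ) := hθ₁pos (z i)
    have h2 : s₂ (z i) ∈ Set.Ioi (0:ℝ) := hθ₂pos (z i)
    have := strictConcaveOn_log_Ioi.2 h1 h2 hne (by norm_num : (0:ℝ) < 1/2)
      (by norm_num : (0:ℝ) < 1/2) (by norm_num)
    simp only [smul_eq_mul] at this
    have heq := hzero i (Finset.mem_univ i)
    have e1 : 1/2 * s₁ (z i) + 1/2 * s₂ (z i) = (s₁ (z i) + s₂ (z i)) / 2 := by ring
    rw [e1] at this
    linarith
  -- every w hit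
  have hsall : ∀ w : 𝓩, s₁ w = s₂ w := by
    intro w
    have := hfreq w
    unfold emp at this
    have hcard : 0 < (Finset.univ.filter (fun i : Fin M => z i = w)).card := by
      by_contra h
      push_neg at h
      interval_cases h' : (Finset.univ.filter (fun i : Fin M => z i = w)).card
      simp [h'] at this
    obtain ⟨i, hi⟩ := Finset.card_pos.mp hcard
    have hiw : z i = w := (Finset.mem_filter.mp hi).2
    rw [← hiw]; exact hsz i
  exact hinj (funext hsall)
end

section
/- (Theorem 3 / soundness of BaBE.) Let 𝓔 and 𝓩 be nonempty finite types, P a channel with P w e > 0 for all w ∈ 𝓩 and e ∈ 𝓔, and z : Fin M → 𝓩 samples such that every w ∈ 𝓩 occurs among the samples (φ(w) > 0 for all w). Assume the linear map (ℝ^𝓔 → ℝ^𝓩) sending θ to (w ↦ Σ_e P w e · θ e) is injective. Define the BaBE iterates by θ⁽⁰⁾ = the uniform distribution on 𝓔 and θ⁽ᵗ⁺¹⁾ = T(θ⁽ᵗ⁾). Then there exists a distribution θ* on 𝓔 such that θ⁽ᵗ⁾ e → θ* e as t → ∞ for every e ∈ 𝓔, and θ* is the maximum-likelihood estimate: L(θ*)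 ≥ L(θ) for every distribution θ on 𝓔 with Σ_e P w e · θ e > 0 for all w ∈ 𝓩. -/
open Finset Real Filter
open scoped Classical

set_option linter.unusedSectionVars false

namespace BaBE

variable {𝓔 𝓩 : Type*} [Fintype 𝓔] [Fintype 𝓩]

/-- the probability simplex -/
def splx (𝓔 : Type*) [Fintype 𝓔] : Set (𝓔 → ℝ) :=
  {θ | (∀ e, 0 ≤ θ e) ∧ ∑ e, θ e = 1}

noncomputable def gee (P : 𝓩 → 𝓔 → ℝ) {M : ℕ} (z : Fin M → 𝓩) (θ : 𝓔 → ℝ) (e : 𝓔) : ℝ :=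
  ∑ w : 𝓩, emp z w * (P w e / ∑ e' : 𝓔, P w e' * θ e')

lemma Aden_pos (P : 𝓩 → 𝓔 → ℝ) (hPpos : ∀ w e, 0 < P w e) {θ : 𝓔 → ℝ}
    (hθ : θ ∈ splx 𝓔) (w : 𝓩) : 0 < ∑ e, P w e * θ e := by
  have hex : ∃ e ∈ Finset.univ, 0 < P w e * θ e := by
    by_contra h
    push_neg at h
    have hz : ∀ e, θ e = 0 := by
      intro e
      have h1 := h e (Finset.mem_univ e)
      have h2 : 0 ≤ θ e := hθ.1 e
      rcases h2.lt_or_eq with h3 | h3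
      · exact absurd (mul_pos (hPpos w e) h3) (not_lt.mpr h1)
      · exact h3.symm
    have h4 := hθ.2
    rw [Finset.sum_congr rfl (fun e _ => hz e)] at h4
    simp at h4
  exact Finset.sum_pos' (fun e _ => mul_nonneg (hPpos w e).le (hθ.1 e)) hex

lemma sum_comp_count {M : ℕ} (z : Fin M → 𝓩) (g : 𝓩 → ℝ) :
    ∑ i : Fin M, g (z i) =
      ∑ w : 𝓩, ((Finset.univ.filter (fun i : Fin M => z i = w)).card : ℝ) * g w := by
  rw [← Finset.sum_fiberwise Finset.univ z (fun i => g (z i))]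
  refine Finset.sum_congr rfl (fun w _ => ?_)
  have h : ∑ i ∈ Finset.univ.filter (fun i => z i = w), g (z i)
      = (Finset.univ.filter (fun i => z i = w)).card • g w := by
    rw [← Finset.sum_const]
    exact Finset.sum_congr rfl (fun i hi => by rw [(Finset.mem_filter.mp hi).2])
  rw [h, nsmul_eq_mul]

lemma cnt_eq {M : ℕ} (hM : 1 ≤ M) (z : Fin M → 𝓩) (w : 𝓩) :
    ((Finset.univ.filter (fun i : Fin M => z i = w)).card : ℝ) = M * emp z w := by
  have hM0 : (M : ℝ) ≠ 0 := Nat.cast_ne_zero.mpr (by omega)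
  unfold emp
  field_simp

lemma emp_sum {M : ℕ} (hM : 1 ≤ M) (z : Fin M → 𝓩) : ∑ w : 𝓩, emp z w = 1 := by
  have hM0 : (M : ℝ) ≠ 0 := Nat.cast_ne_zero.mpr (by omega)
  have h := sum_comp_count z (fun _ => (1 : ℝ))
  simp only [mul_one, Finset.sum_const, Finset.card_univ, Fintype.card_fin, nsmul_eq_mul] at h
  unfold emp
  rw [← Finset.sum_div]
  rw [← h]
  field_simp

lemma loglik_eq (P : 𝓩 → 𝓔 → ℝ) {M : ℕ} (hM : 1 ≤ M) (z : Fin M → 𝓩) (θ : 𝓔 → ℝ) :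
    loglik P z θ = M * ∑ w : 𝓩, emp z w * Real.log (∑ e, P w e * θ e) := by
  unfold loglik
  rw [sum_comp_count z (fun w => Real.log (∑ e, P w e * θ e)), Finset.mul_sum]
  exact Finset.sum_congr rfl (fun w _ => by rw [cnt_eq hM z w]; ring

)

lemma West_sum (P : 𝓩 → 𝓔 → ℝ) {θ : 𝓔 → ℝ} {w : 𝓩}
    (hA : (∑ e' : 𝓔, P w e' * θ e') ≠ 0) : ∑ e : 𝓔, West P θ w e = 1 := by
  unfold West
  rw [← Finset.sum_div]
  field_simp

lemma babe_eq (P : 𝓩 → 𝓔 → ℝ) {M : ℕ} (z : Fin M → 𝓩) (θ : 𝓔 → ℝ) (e : 𝓔) :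
    babe P z θ e = θ e * gee P z θ e := by
  unfold babe gee West
  rw [Finset.mul_sum]
  exact Finset.sum_congr rfl (fun w _ => by ring)

lemma gee_pos [Nonempty 𝓩] (P : 𝓩 → 𝓔 → ℝ) (hPpos : ∀ w e, 0 < P w e) {M : ℕ}
    (z : Fin M → 𝓩) (hfreq : ∀ w, 0 < emp z w) {θ : 𝓔 → ℝ} (hθ : θ ∈ splx 𝓔) (e : 𝓔) :
    0 < gee P z θ e := by
  unfold gee
  refine Finset.sum_pos (fun w _ => ?_) Finset.univ_nonempty
  exact mul_pos (hfreq w) (div_pos (hPpos w e) (Aden_pos P hPpos hθ w))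

lemma babe_splx [Nonempty 𝓩] (P : 𝓩 → 𝓔 → ℝ) (hPpos : ∀ w e, 0 < P w e)
    {M : ℕ} (hM : 1 ≤ M) (z : Fin M → 𝓩) (hfreq : ∀ w, 0 < emp z w)
    {θ : 𝓔 → ℝ} (hθ : θ ∈ splx 𝓔) (hpos : ∀ e, 0 < θ e) :
    babe P z θ ∈ splx 𝓔 ∧ ∀ e, 0 < babe P z θ e := by
  have hpos' : ∀ e, 0 < babe P z θ e := by
    intro e
    rw [babe_eq]
    exact mul_pos (hpos e) (gee_pos P hPpos z hfreq hθ e)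
  refine ⟨⟨fun e => (hpos' e).le, ?_⟩, hpos'⟩
  unfold babe
  rw [Finset.sum_comm]
  have h : ∀ w : 𝓩, ∑ e : 𝓔, emp z w * West P θ w e = emp z w := by
    intro w
    rw [← Finset.mul_sum, West_sum P (Aden_pos P hPpos hθ w).ne', mul_one]
  rw [Finset.sum_congr rfl (fun w _ => h w)]
  exact emp_sum hM z

lemma splx_isCompact : IsCompact (splx 𝓔) := by
  have hsub : splx 𝓔 ⊆ Set.pi Set.univ (fun _ : 𝓔 => Set.Icc (0:ℝ) 1) := by
    intro θ hθ e _
    refine ⟨hθ.1 e, ?_⟩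
    calc θ e = ∑ e' ∈ {e}, θ e' := by simp
    _ ≤ ∑ e', θ e' := Finset.sum_le_sum_of_subset_of_nonneg (Finset.subset_univ _)
        (fun e' _ _ => hθ.1 e')
    _ = 1 := hθ.2
  have hclosed : IsClosed (splx 𝓔) := by
    have h1 : IsClosed {θ : 𝓔 → ℝ | ∀ e, 0 ≤ θ e} := by
      have : {θ : 𝓔 → ℝ | ∀ e, 0 ≤ θ e} = ⋂ e, (fun θ : 𝓔 → ℝ => θ e) ⁻¹' Set.Ici 0 := by
        ext θ; simp [Set.mem_iInter]
      rw [this]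
      exact isClosed_iInter (fun e => isClosed_Ici.preimage (continuous_apply e))
    have h2 : IsClosed {θ : 𝓔 → ℝ | ∑ e, θ e = 1} :=
      isClosed_eq (by continuity) continuous_const
    exact h1.inter h2
  exact (isCompact_univ_pi (fun _ => isCompact_Icc)).of_isClosed_subset hclosed hsub

lemma loglik_continuousOn (P : 𝓩 → 𝓔 → ℝ) (hPpos : ∀ w e, 0 < P w e) {M : ℕ}
    (z : Fin M → 𝓩) : ContinuousOn (loglik P z) (splx 𝓔) := by
  unfold loglik
  refine continuousOn_finset_sum _ (fun i _ => ContinuousOn.log ?_ ?_)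
  · exact (continuous_finset_sum _ (fun e _ =>
      continuous_const.mul (continuous_apply e))).continuousOn
  · exact fun θ hθ => (Aden_pos P hPpos hθ (z i)).ne'


lemma half_log_le {x y : ℝ} (hx : 0 < x) (hy : 0 < y) :
    (1/2) * Real.log x + (1/2) * Real.log y ≤ Real.log ((1/2) * x + (1/2) * y) :=
  strictConcaveOn_log_Ioi.concaveOn.2 hx hy (by norm_num) (by norm_num) (by norm_num)

lemma half_log_lt {x y : ℝ} (hx : 0 < x) (hy : 0 < y) (hxy : x ≠ y) :
    (1/2) * Real.log x + (1/2) * Real.log y < Real.log ((1/2) * x + (1/2) * y) :=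
  strictConcaveOn_log_Ioi.2 hx hy hxy (by norm_num) (by norm_num) (by norm_num)

lemma max_unique [Nonempty 𝓩] (P : 𝓩 → 𝓔 → ℝ) (hPpos : ∀ w e, 0 < P w e)
    {M : ℕ} (hM : 1 ≤ M) (z : Fin M → 𝓩) (hfreq : ∀ w, 0 < emp z w)
    (hinj : Function.Injective (fun (θ : 𝓔 → ℝ) (w : 𝓩) => ∑ e : 𝓔, P w e * θ e))
    {θ θ' : 𝓔 → ℝ} (hθ : θ ∈ splx 𝓔) (hθ' : θ' ∈ splx 𝓔)
    (hmax : IsMaxOn (loglik P z) (splx 𝓔) θ) (hmax' : IsMaxOn (loglik P z) (splx 𝓔) θ') :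
    θ = θ' := by
  by_contra hne
  have hPne : (fun w => ∑ e, P w e * θ e) ≠ (fun w => ∑ e, P w e * θ' e) :=
    fun h => hne (hinj h)
  obtain ⟨w0, hw0⟩ := Function.ne_iff.mp hPne
  -- midpoint
  set m : 𝓔 → ℝ := fun e => (1/2) * θ e + (1/2) * θ' e with hm_def
  have hm : m ∈ splx 𝓔 := by
    constructor
    · intro e
      have := hθ.1 e; have := hθ'.1 e
      positivity
    · simp only [hm_def, Finset.sum_add_distrib, ← Finset.mul_sum, hθ.2, hθ'.2]
      norm_num
  have hAm : ∀ w, ∑ e, P w e * m e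
      = (1/2) * (∑ e, P w e * θ e) + (1/2) * (∑ e, P w e * θ' e) := by
    intro w
    simp only [hm_def, Finset.mul_sum, ← Finset.sum_add_distrib]
    exact Finset.sum_congr rfl (fun e _ => by ring)
  -- an index hitting w0
  have hcard : (Finset.univ.filter (fun i : Fin M => z i = w0)).Nonempty := by
    rw [Finset.nonempty_iff_ne_empty]
    intro h
    have := hfreq w0
    rw [emp, h] at this
    simp at this
  obtain ⟨i0, hi0⟩ := hcard
  have hi0' : z i0 = w0 := (Finset.mem_filter.mp hi0).2
  have hLm : loglik P z θ < loglik P z m := by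
    have heq : loglik P z θ = ∑ i : Fin M,
        ((1/2) * Real.log (∑ e, P (z i) e * θ e) + (1/2) * Real.log (∑ e, P (z i) e * θ' e)) := by
      have hv : loglik P z θ' = loglik P z θ :=
        le_antisymm (hmax hθ') (hmax' hθ)
      unfold loglik
      rw [Finset.sum_add_distrib, ← Finset.mul_sum, ← Finset.mul_sum]
      have : (∑ i : Fin M, Real.log (∑ e, P (z i) e * θ' e)) =
          ∑ i : Fin M, Real.log (∑ e, P (z i) e * θ e) := hv
      rw [this]; ring
    rw [heq]
    unfold loglik
    refine Finset.sum_lt_sum (fun i _ => ?_) ⟨i0, Finset.mem_univ i0, ?_⟩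
    · rw [hAm]
      exact half_log_le (Aden_pos P hPpos hθ (z i)) (Aden_pos P hPpos hθ' (z i))
    · rw [hAm]
      exact half_log_lt (Aden_pos P hPpos hθ (z i0)) (Aden_pos P hPpos hθ' (z i0))
        (by rw [hi0']; exact hw0)
  exact absurd (hmax hm) (not_le.mpr hLm)


lemma kkt_aux (P : 𝓩 → 𝓔 → ℝ) (hPpos : ∀ w e, 0 < P w e) {M : ℕ} (z : Fin M → 𝓩)
    {θs : 𝓔 → ℝ} (hθs : θs ∈ splx 𝓔) (hmax : IsMaxOn (loglik P z) (splx 𝓔) θs)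
    {e f : 𝓔} (he : 0 < θs e) (hf : 0 < θs f) :
    ∑ i : Fin M, P (z i) e / (∑ e', P (z i) e' * θs e')
      = ∑ i : Fin M, P (z i) f / (∑ e', P (z i) e' * θs e') := by
  rcases eq_or_ne e f with rfl | hef
  · rfl
  set A : 𝓩 → ℝ := fun w => ∑ e', P w e' * θs e' with hA
  have hApos : ∀ w, 0 < A w := fun w => Aden_pos P hPpos hθs w
  set d : 𝓔 → ℝ := fun x => (if x = e then 1 else 0) - (if x = f then 1 else 0) with hd
  set c : 𝓩 → ℝ := fun w => P w e - P w f with hc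
  have hsum_d : ∀ w, ∑ x, P w x * d x = c w := by
    intro w
    simp only [hd, hc, mul_sub, mul_ite, mul_one, mul_zero, Finset.sum_sub_distrib,
      Finset.sum_ite_eq' Finset.univ, Finset.mem_univ, if_true]
  have hd_sum : ∑ x, d x = 0 := by
    simp only [hd, Finset.sum_sub_distrib, Finset.sum_ite_eq' Finset.univ,
      Finset.mem_univ, if_true, sub_self]
  have hpert : ∀ (t : ℝ) (w : 𝓩), ∑ x, P w x * (θs x + t * d x) = A w + t * c w := by
    intro t w
    simp only [mul_add, Finset.sum_add_distrib]
    rw [hA]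
    congr 1
    rw [← hsum_d w, Finset.mul_sum]
    exact Finset.sum_congr rfl (fun x _ => by ring)
  have hmem : ∀ t ∈ Set.Ioo (-θs e) (θs f), (fun x => θs x + t * d x) ∈ splx 𝓔 := by
    intro t ht
    constructor
    · intro x
      show 0 ≤ θs x + t * d x
      by_cases hx1 : x = e
      · subst hx1
        have : d x = 1 := by simp [hd, hef]
        rw [this]
        have := ht.1
        linarith
      · by_cases hx2 : x = f
        · subst hx2
          have : d x = -1 := by simp [hd, hx1]
          rw [this]
          have := ht.2
          linarith
        · have : d x = 0 := by simp [hd, hx1, hx2]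
          rw [this]
          simpa using hθs.1 x
    · simp only [Finset.sum_add_distrib, hθs.2, ← Finset.mul_sum, hd_sum, mul_zero, add_zero]
  have hderiv : HasDerivAt (fun t => ∑ i : Fin M, Real.log (A (z i) + t * c (z i)))
      (∑ i : Fin M, c (z i) / A (z i)) 0 := by
    refine HasDerivAt.fun_sum (fun i _ => ?_)
    have h1 : HasDerivAt (fun t : ℝ => A (z i) + t * c (z i)) (c (z i)) 0 :=
      (hasDerivAt_mul_const (c (z i))).const_add (A (z i))
    have h2 := h1.log (by simpa using (hApos (z i)).ne')
    simpa using h2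
  have hloc : IsLocalMax (fun t => ∑ i : Fin M, Real.log (A (z i) + t * c (z i))) 0 := by
    have hnb : Set.Ioo (-θs e) (θs f) ∈ nhds (0:ℝ) := Ioo_mem_nhds (by linarith) hf
    filter_upwards [hnb] with t ht
    have hmem' := hmem t ht
    have h1 : (∑ i : Fin M, Real.log (A (z i) + t * c (z i)))
        = loglik P z (fun x => θs x + t * d x) := by
      unfold loglik
      exact Finset.sum_congr rfl (fun i _ => by rw [hpert])
    have h0 : (∑ i : Fin M, Real.log (A (z i) + 0 * c (z i))) = loglik P z θs := by
      unfold loglik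
      refine Finset.sum_congr rfl (fun i _ => ?_)
      rw [hA]
      norm_num
    show (∑ i : Fin M, Real.log (A (z i) + t * c (z i)))
        ≤ ∑ i : Fin M, Real.log (A (z i) + 0 * c (z i))
    rw [h1, h0]
    exact hmax hmem'
  have hzero : (∑ i : Fin M, c (z i) / A (z i)) = 0 :=
    hloc.hasDerivAt_eq_zero hderiv
  have hsplit : (∑ i : Fin M, c (z i) / A (z i))
      = (∑ i : Fin M, P (z i) e / A (z i)) - ∑ i : Fin M, P (z i) f / A (z i) := by
    rw [← Finset.sum_sub_distrib]
    exact Finset.sum_congr rfl (fun i _ => by rw [hc]; ring)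
  rw [hsplit] at hzero
  linarith [hzero]

lemma kkt [Nonempty 𝓩] (P : 𝓩 → 𝓔 → ℝ) (hPpos : ∀ w e, 0 < P w e) {M : ℕ}
    (z : Fin M → 𝓩)
    {θs : 𝓔 → ℝ} (hθs : θs ∈ splx 𝓔) (hmax : IsMaxOn (loglik P z) (splx 𝓔) θs)
    {e : 𝓔} (he : 0 < θs e) :
    ∑ i : Fin M, P (z i) e / (∑ e', P (z i) e' * θs e') = M := by
  set G : 𝓔 → ℝ := fun x => ∑ i : Fin M, P (z i) x / (∑ e', P (z i) e' * θs e') with hG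
  have hstep2 : ∑ x, θs x * G x = M := by
    rw [hG]
    simp only [Finset.mul_sum]
    rw [Finset.sum_comm]
    have h1 : ∀ i : Fin M, ∑ x, θs x * (P (z i) x / (∑ e', P (z i) e' * θs e')) = 1 := by
      intro i
      have hA := Aden_pos P hPpos hθs (z i)
      have h2 : ∑ x, θs x * (P (z i) x / (∑ e', P (z i) e' * θs e'))
          = (∑ x, P (z i) x * θs x) / (∑ e', P (z i) e' * θs e') := by
        rw [Finset.sum_div]
        exact Finset.sum_congr rfl (fun x _ => by ring)
      rw [h2, div_self hA.ne']
    rw [Finset.sum_congr rfl (fun i _ => h1 i)]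
    simp
  have hconst : ∀ x, 0 < θs x → G x = G e := by
    intro x hx
    exact kkt_aux P hPpos z hθs hmax hx he
  have htermwise : ∀ x, θs x * G x = θs x * G e := by
    intro x
    rcases (hθs.1 x).lt_or_eq with hx | hx
    · rw [hconst x hx]
    · rw [← hx]; ring
  rw [Finset.sum_congr rfl (fun x _ => htermwise x), ← Finset.sum_mul, hθs.2, one_mul] at hstep2
  exact hstep2


lemma gibbs {θs θ : 𝓔 → ℝ} (hθs : θs ∈ splx 𝓔) (hθpos : ∀ e, 0 < θ e)
    (hθsum : ∑ e, θ e = 1) :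
    0 ≤ ∑ e, θs e * Real.log (θs e / θ e) := by
  have h : ∀ e, θs e * Real.log (θ e / θs e) ≤ θ e - θs e := by
    intro e
    rcases (hθs.1 e).lt_or_eq with hp | hp
    · have hlog := Real.log_le_sub_one_of_pos (div_pos (hθpos e) hp)
      calc θs e * Real.log (θ e / θs e) ≤ θs e * (θ e / θs e - 1) := by nlinarith
        _ = θ e - θs e := by field_simp
    · rw [← hp]
      simpa using (hθpos e).le
  have h2 : ∑ e, θs e * Real.log (θ e / θs e) ≤ 0 := by
    calc ∑ e, θs e * Real.log (θ e / θs e) ≤ ∑ e, (θ e - θs e) :=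
      Finset.sum_le_sum (fun e _ => h e)
    _ = 0 := by rw [Finset.sum_sub_distrib, hθsum, hθs.2]; ring
  have h3 : ∀ e, θs e * Real.log (θs e / θ e) = -(θs e * Real.log (θ e / θs e)) := by
    intro e
    rcases (hθs.1 e).lt_or_eq with hp | hp
    · rw [Real.log_div hp.ne' (hθpos e).ne', Real.log_div (hθpos e).ne' hp.ne']; ring
    · rw [← hp]; ring
  rw [Finset.sum_congr rfl (fun e _ => h3 e), Finset.sum_neg_distrib]
  linarith

lemma key_ineq [Nonempty 𝓩] (P : 𝓩 → 𝓔 → ℝ) (hPpos : ∀ w e, 0 < P w e)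
    {M : ℕ} (hM : 1 ≤ M) (z : Fin M → 𝓩)
    {θs : 𝓔 → ℝ} (hθs : θs ∈ splx 𝓔) (hmax : IsMaxOn (loglik P z) (splx 𝓔) θs)
    {θ' : 𝓔 → ℝ} (hθ' : θ' ∈ splx 𝓔) :
    (loglik P z θs - loglik P z θ') / M ≤ ∑ e, θs e * Real.log (gee P z θ' e) := by
  have hM0 : (0:ℝ) < M := Nat.cast_pos.mpr (by omega)
  have hAspos : ∀ w, 0 < ∑ e', P w e' * θs e' := fun w => Aden_pos P hPpos hθs w
  have hA'pos : ∀ w, 0 < ∑ e', P w e' * θ' e' := fun w => Aden_pos P hPpos hθ' w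
  set R : 𝓩 → ℝ :=
    fun w => Real.log (∑ e', P w e' * θs e') - Real.log (∑ e', P w e' * θ' e') with hR
  have hstepA : (loglik P z θs - loglik P z θ') / M = ∑ w, emp z w * R w := by
    rw [loglik_eq P hM z θs, loglik_eq P hM z θ', ← mul_sub,
      mul_div_cancel_left₀ _ hM0.ne', ← Finset.sum_sub_distrib]
    exact Finset.sum_congr rfl (fun w _ => by rw [hR]; ring)
  have hstepB : ∑ e, θs e * (∑ w, (emp z w * (P w e / ∑ e', P w e' * θs e')) * R w)
      = ∑ w, emp z w * R w := by
    have hswap : ∑ e, θs e * (∑ w, (emp z w * (P w e / ∑ e', P w e' * θs e')) * R w)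
        = ∑ w : 𝓩, ∑ e, θs e * ((emp z w * (P w e / ∑ e', P w e' * θs e')) * R w) := by
      rw [Finset.sum_comm]
      exact Finset.sum_congr rfl (fun e _ => by rw [Finset.mul_sum])
    rw [hswap]
    refine Finset.sum_congr rfl (fun w _ => ?_)
    have h1 : ∑ e, θs e * ((emp z w * (P w e / ∑ e', P w e' * θs e')) * R w)
        = (emp z w * R w / (∑ e', P w e' * θs e')) * ∑ e, P w e * θs e := by
      rw [Finset.mul_sum]
      exact Finset.sum_congr rfl (fun e _ => by ring)
    rw [h1, div_mul_cancel₀ _ (hAspos w).ne']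
  rw [hstepA, ← hstepB]
  refine Finset.sum_le_sum (fun e _ => ?_)
  rcases (hθs.1 e).lt_or_eq with hpos | hzero
  · -- Jensen
    refine mul_le_mul_of_nonneg_left ?_ (hθs.1 e)
    set q : 𝓩 → ℝ := fun w => emp z w * (P w e / ∑ e', P w e' * θs e') with hq
    have hq0 : ∀ w ∈ Finset.univ, 0 ≤ q w := by
      intro w _
      have h0 : 0 ≤ emp z w := by
        unfold emp; positivity
      exact mul_nonneg h0 (div_nonneg (hPpos w e).le (hAspos w).le)
    have hq1 : ∑ w, q w = 1 := by
      have hk := kkt P hPpos z hθs hmax hpos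
      have hc := sum_comp_count z (fun w => P w e / ∑ e', P w e' * θs e')
      rw [hk] at hc
      have hc2 : (M:ℝ) * ∑ w, q w
          = ∑ w, ((Finset.univ.filter (fun i : Fin M => z i = w)).card : ℝ)
              * (P w e / ∑ e', P w e' * θs e') := by
        rw [Finset.mul_sum]
        exact Finset.sum_congr rfl (fun w _ => by rw [hq, cnt_eq hM z w]; ring)
      have h3 : (M:ℝ) * ∑ w, q w = (M:ℝ) * 1 := by rw [mul_one]; exact hc2.trans hc.symm
      exact mul_left_cancel₀ hM0.ne' h3
    have hmem : ∀ w ∈ Finset.univ,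
        (∑ e', P w e' * θs e') / (∑ e', P w e' * θ' e') ∈ Set.Ioi (0:ℝ) :=
      fun w _ => div_pos (hAspos w) (hA'pos w)
    have hjen := (strictConcaveOn_log_Ioi.concaveOn).le_map_sum hq0 hq1 hmem
    simp only [smul_eq_mul] at hjen
    have hgee : ∑ w, q w * ((∑ e', P w e' * θs e') / (∑ e', P w e' * θ' e'))
        = gee P z θ' e := by
      unfold gee
      refine Finset.sum_congr rfl (fun w _ => ?_)
      rw [hq, mul_assoc, div_mul_div_comm]
      congr 1
      rw [div_eq_div_iff (mul_pos (hAspos w) (hA'pos w)).ne' (hA'pos w).ne']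
      ring
    have hlogr : ∀ w, Real.log ((∑ e', P w e' * θs e') / (∑ e', P w e' * θ' e')) = R w :=
      fun w => Real.log_div (hAspos w).ne' (hA'pos w).ne'
    calc ∑ w, q w * R w = ∑ w, q w * Real.log ((∑ e', P w e' * θs e') / (∑ e', P w e' * θ' e')) :=
        Finset.sum_congr rfl (fun w _ => by rw [hlogr])
      _ ≤ Real.log (∑ w, q w * ((∑ e', P w e' * θs e') / (∑ e', P w e' * θ' e'))) := hjen
      _ = Real.log (gee P z θ' e) := by rw [hgee]
  · rw [← hzero]
    simp

end BaBE

open BaBE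

theorem stmt12 {𝓔 𝓩 : Type*} [Fintype 𝓔] [Fintype 𝓩] [Nonempty 𝓔] [Nonempty 𝓩]
    (P : 𝓩 → 𝓔 → ℝ) (hPpos : ∀ w e, 0 < P w e) (hPsum : ∀ e, ∑ w : 𝓩, P w e = 1)
    {M : ℕ} (hM : 1 ≤ M) (z : Fin M → 𝓩)
    (hfreq : ∀ w : 𝓩, 0 < emp z w)
    (hinj : Function.Injective (fun (θ : 𝓔 → ℝ) (w : 𝓩) => ∑ e : 𝓔, P w e * θ e))
    (θseq : ℕ → 𝓔 → ℝ)
    (h0 : θseq 0 = fun _ => 1 / (Fintype.card 𝓔 : ℝ))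
    (hstep : ∀ t : ℕ, θseq (t + 1) = babe P z (θseq t)) :
    ∃ θstar : 𝓔 → ℝ,
      (∀ e : 𝓔, 0 ≤ θstar e) ∧ (∑ e : 𝓔, θstar e = 1) ∧
      (∀ e : 𝓔, Tendsto (fun t : ℕ => θseq t e) atTop (nhds (θstar e))) ∧
      (∀ θ : 𝓔 → ℝ, (∀ e, 0 ≤ θ e) → (∑ e : 𝓔, θ e = 1) →
        (∀ w : 𝓩, 0 < ∑ e : 𝓔, P w e * θ e) → loglik P z θ ≤ loglik P z θstar) := by
  have hM0 : (0:ℝ) < M := Nat.cast_pos.mpr (by omega)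
  have hcard : (0:ℝ) < (Fintype.card 𝓔 : ℝ) := Nat.cast_pos.mpr Fintype.card_pos
  -- iterates stay in the positive simplex
  have hsplx : ∀ t, θseq t ∈ splx 𝓔 ∧ ∀ e, 0 < θseq t e := by
    intro t
    induction t with
    | zero =>
      rw [h0]
      refine ⟨⟨fun e => by positivity, ?_⟩, fun e => by positivity⟩
      rw [Finset.sum_const, Finset.card_univ, nsmul_eq_mul]
      field_simp
    | succ t ih =>
      rw [hstep t]
      have := babe_splx P hPpos hM z hfreq ih.1 ih.2
      exact ⟨this.1, this.2⟩
  -- maximizer exists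
  obtain ⟨θs, hθs, hmax⟩ := splx_isCompact.exists_isMaxOn ⟨θseq 0, (hsplx 0).1⟩
    (loglik_continuousOn P hPpos z)
  -- KL potential
  set D : ℕ → ℝ := fun t => ∑ e, θs e * Real.log (θs e / θseq t e) with hD
  have hD0 : ∀ t, 0 ≤ D t := fun t => gibbs hθs (hsplx t).2 (hsplx t).1.2
  have hDdiff : ∀ t, (loglik P z θs - loglik P z (θseq t)) / M ≤ D t - D (t+1) := by
    intro t
    refine le_trans (key_ineq P hPpos hM z hθs hmax (hsplx t).1) (le_of_eq ?_)
    rw [hD, ← Finset.sum_sub_distrib]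
    refine Finset.sum_congr rfl (fun e _ => ?_)
    rcases (hθs.1 e).lt_or_eq with hp | hp
    · have h1 : θseq (t+1) e = θseq t e * gee P z (θseq t) e := by
        rw [hstep t, babe_eq]
      have hgpos : 0 < gee P z (θseq t) e := gee_pos P hPpos z hfreq (hsplx t).1 e
      have htpos := (hsplx t).2 e
      have ht1pos := (hsplx (t+1)).2 e
      rw [← mul_sub]
      congr 1
      rw [Real.log_div hp.ne' htpos.ne', Real.log_div hp.ne' ht1pos.ne', h1,
        Real.log_mul htpos.ne' hgpos.ne']
      ring
    · rw [← hp]; ring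
  -- likelihood converges to the max
  set a : ℕ → ℝ := fun t => (loglik P z θs - loglik P z (θseq t)) / M with ha
  have ha0 : ∀ t, 0 ≤ a t := fun t =>
    div_nonneg (sub_nonneg.mpr (hmax (hsplx t).1)) hM0.le
  have hasum : ∀ n, ∑ t ∈ Finset.range n, a t ≤ D 0 := by
    intro n
    calc ∑ t ∈ Finset.range n, a t ≤ ∑ t ∈ Finset.range n, (D t - D (t+1)) :=
        Finset.sum_le_sum (fun t _ => hDdiff t)
      _ = D 0 - D n := Finset.sum_range_sub' D n
      _ ≤ D 0 := by linarith [hD0 n]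
  have hatend : Tendsto a atTop (nhds 0) :=
    (summable_of_sum_range_le ha0 hasum).tendsto_atTop_zero
  have hLtend : Tendsto (fun t => loglik P z (θseq t)) atTop (nhds (loglik P z θs)) := by
    have h1 : (fun t => loglik P z (θseq t)) = fun t => loglik P z θs - M * a t := by
      funext t
      rw [ha]
      field_simp
      ring
    rw [h1]
    have h2 := (tendsto_const_nhds (x := loglik P z θs) (f := atTop (α := ℕ))).sub
      (hatend.const_mul (M:ℝ))
    simpa using h2
  -- the iterates converge to θs
  have htendθ : Tendsto θseq atTop (nhds θs) := by
    apply Filter.tendsto_of_subseq_tendsto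
    intro ns hns
    obtain ⟨a', ha'mem, φ, hφ, hconv⟩ :=
      splx_isCompact.tendsto_subseq (x := fun n => θseq (ns n)) (fun n => (hsplx (ns n)).1)
    have hwithin : Tendsto (fun n => θseq (ns (φ n))) atTop (nhdsWithin a' (splx 𝓔)) :=
      tendsto_nhdsWithin_iff.mpr ⟨hconv, Filter.Eventually.of_forall (fun n => (hsplx _).1)⟩
    have hL1 : Tendsto (fun n => loglik P z (θseq (ns (φ n)))) atTop (nhds (loglik P z a')) :=
      ((loglik_continuousOn P hPpos z).continuousWithinAt ha'mem).tendsto.comp hwithin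
    have hL2 : Tendsto (fun n => loglik P z (θseq (ns (φ n)))) atTop
        (nhds (loglik P z θs)) :=
      hLtend.comp (hns.comp hφ.tendsto_atTop)
    have hLeq : loglik P z a' = loglik P z θs := tendsto_nhds_unique hL1 hL2
    have hmaxa' : IsMaxOn (loglik P z) (splx 𝓔) a' := by
      intro y hy
      simp only [Set.mem_setOf_eq]
      rw [hLeq]
      exact hmax hy
    have heq : a' = θs := max_unique P hPpos hM z hfreq hinj ha'mem hθs hmaxa' hmax
    exact ⟨φ, heq ▸ hconv⟩
  refine ⟨θs, hθs.1, hθs.2, fun e => ?_, fun θ hnn hsum _ => hmax (⟨hnn, hsum⟩ : θ ∈ splx 𝓔)⟩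
  exact ((continuous_apply e).tendsto θs).comp htendθ
end
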